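/- For odd d, the function f_d(x,y) = ((x + sqrt(x^2+4y))/2)^d + ((x - sqrt(x^2+4y))/2)^d + y^d is a polynomial in x and y, and satisfies f_d(x,y) = 1 whenever x + y = 1. -/

import Mathlib

open MvPolynomial

noncomputable def myP : ℕ → MvPolynomial (Fin 2) ℝ
  | 0 => 2
  | 1 => X 0
  | (n+2) => X 0 * myP (n+1) + X 1 * myP n

lemma myP_eval (n : ℕ) : ∀ x y : ℝ, 0 ≤ x ^ 2 + 4 * y →
    MvPolynomial.eval ![x, y] (myP n) =
      ((x + Real.sqrt (x ^ 2 + 4 * y)) / 2) ^ n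
        + ((x - Real.sqrt (x ^ 2 + 4 * y)) / 2) ^ n := by
  induction n using Nat.strong_induction_on with
  | _ n ih =>
    intro x y h
    match n with
    | 0 => norm_num [myP]
    | 1 =>
      simp [myP]
      have hs : Real.sqrt (x ^ 2 + 4 * y) ^ 2 = x ^ 2 + 4 * y := Real.sq_sqrt h
      set s := Real.sqrt (x ^ 2 + 4 * y)
      ring
    | (n+2) =>
      have h1 := ih (n+1) (by omega) x y h
      have h0 := ih n (by omega) x y h
      have hs : Real.sqrt (x ^ 2 + 4 * y) ^ 2 = x ^ 2 + 4 * y := Real.sq_sqrt h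
      simp only [myP, map_add, map_mul, eval_X, Matrix.cons_val_zero, Matrix.cons_val_one,
        Matrix.head_cons, h1, h0]
      set s := Real.sqrt (x ^ 2 + 4 * y) with hsdef
      set u := (x + s) / 2 with hu
      set v := (x - s) / 2 with hv
      have hx : x = u + v := by rw [hu, hv]; ring
      have hy : y = -(u * v) := by rw [hu, hv]; field_simp; nlinarith [hs]
      rw [hx, hy]; ring

theorem stmt_1 (d : ℕ) (hd : Odd d) :
    (∃ p : MvPolynomial (Fin 2) ℝ, ∀ x y : ℝ, 0 ≤ x ^ 2 + 4 * y →
      MvPolynomial.eval ![x, y] p =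
        ((x + Real.sqrt (x ^ 2 + 4 * y)) / 2) ^ d
          + ((x - Real.sqrt (x ^ 2 + 4 * y)) / 2) ^ d + y ^ d) ∧
    (∀ x y : ℝ, x + y = 1 →
      ((x + Real.sqrt (x ^ 2 + 4 * y)) / 2) ^ d
        + ((x - Real.sqrt (x ^ 2 + 4 * y)) / 2) ^ d + y ^ d = 1) := by
  constructor
  · refine ⟨myP d + (X 1) ^ d, fun x y h => ?_⟩
    simp only [map_add, map_pow, eval_X, Matrix.cons_val_one, Matrix.head_cons, Matrix.cons_val_zero, myP_eval d x y h]
  · intro x y hxy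
    have hy : y = 1 - x := by linarith
    have hsq : x ^ 2 + 4 * y = (x - 2) ^ 2 := by rw [hy]; ring
    rw [hsq, Real.sqrt_sq_eq_abs]
    rcases abs_cases (x - 2) with ⟨h1, _⟩ | ⟨h1, _⟩
    · rw [h1, hy, show (x + (x - 2)) / 2 = x - 1 from by ring,
        show (x - (x - 2)) / 2 = 1 from by ring,
        show (1 - x) = -(x - 1) from by ring, hd.neg_pow, one_pow]
      ring
    · rw [h1, hy, show (x + -(x - 2)) / 2 = 1 from by ring,
        show (x - -(x - 2)) / 2 = x - 1 from by ring,
        show (1 - x) = -(x - 1) from by ring, hd.neg_pow, one_pow]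
      ring
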